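/- Let k ≥ 0 and N ≥ 1, and let {H_n} be the PLRS generated by the coefficients [1, 0, ..., 0, N] with k zeros between the initial 1 and the final coefficient N (so L = k + 2). Then {H_n} is complete if and only if 1 ≤ N ≤ ⌈(k+2)(k+3)/4⌉. -/

import Mathlib

/-- `H` (indexed from 1) is the Positive Linear Recurrence Sequence generated by the
coefficients `c 1, …, c L` (nonnegative integers with `L`, `c 1`, `c L` positive):
`H 1 = 1`, `H (n+1) = c 1 * H n + ⋯ + c n * H 1 + 1` for `1 ≤ n < L`, and
`H (n+1) = c 1 * H n + ⋯ + c L * H (n+1-L)` for `n ≥ L`. -/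
def IsPLRS (L : ℕ) (c : ℕ → ℕ) (H : ℕ → ℕ) : Prop :=
  0 < L ∧ 0 < c 1 ∧ 0 < c L ∧ H 1 = 1 ∧
  (∀ n, 1 ≤ n → n < L →
    H (n + 1) = (∑ j ∈ Finset.Icc 1 n, c j * H (n + 1 - j)) + 1) ∧
  (∀ n, L ≤ n →
    H (n + 1) = ∑ j ∈ Finset.Icc 1 L, c j * H (n + 1 - j))

/-- A sequence (indexed from 1) is complete if every positive integer is a sum of
terms of the sequence over a finite set of distinct indices (each ≥ 1). -/
def SeqComplete (H : ℕ → ℕ) : Prop :=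
  ∀ m : ℕ, 0 < m → ∃ S : Finset ℕ, (∀ i ∈ S, 1 ≤ i) ∧ m = ∑ i ∈ S, H i

/-- The `n`th Brown's gap of a sequence: `B_{H,n} = 1 + ∑_{i=1}^{n-1} H i − H n`. -/
def BrownGap (H : ℕ → ℕ) (n : ℕ) : ℤ :=
  1 + (∑ i ∈ Finset.Icc 1 (n - 1), (H i : ℤ)) - (H n : ℤ)

lemma brown_complete (H : ℕ → ℕ) (hpos : ∀ n, 1 ≤ n → 1 ≤ H n)
    (hb : ∀ n, 1 ≤ n → H n ≤ 1 + ∑ i ∈ Finset.Icc 1 (n - 1), H i) :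
    SeqComplete H := by
  have key : ∀ n m, 1 ≤ m → m ≤ ∑ i ∈ Finset.Icc 1 n, H i →
      ∃ T : Finset ℕ, T ⊆ Finset.Icc 1 n ∧ m = ∑ i ∈ T, H i := by
    intro n
    induction n with
    | zero => intro m hm hle; simp at hle; omega
    | succ n ih =>
      intro m hm hle
      rw [Finset.sum_Icc_succ_top (by omega : 1 ≤ n+1)] at hle
      by_cases hcase : m ≤ ∑ i ∈ Finset.Icc 1 n, H i
      · obtain ⟨T, hT, hsum⟩ := ih m hm hcase
        exact ⟨T, hT.trans (Finset.Icc_subset_Icc_right (by omega)), hsum⟩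
      · push_neg at hcase
        have hb' := hb (n+1) (by omega)
        simp only [Nat.add_sub_cancel] at hb'
        have hHn1 : H (n+1) ≤ m := by omega
        by_cases hm0 : m = H (n+1)
        · refine ⟨{n+1}, ?_, ?_⟩
          · simp only [Finset.singleton_subset_iff, Finset.mem_Icc]; omega
          · simp [hm0]
        · obtain ⟨T, hT, hsum⟩ := ih (m - H (n+1)) (by omega) (by omega)
          have hnotmem : n+1 ∉ T := by
            intro hc
            have := Finset.mem_Icc.mp (hT hc); omega
          refine ⟨insert (n+1) T, ?_, ?_⟩
          · intro x hx
            rcases Finset.mem_insert.mp hx with h | h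
            · subst h; simp only [Finset.mem_Icc]; omega
            · have := Finset.mem_Icc.mp (hT h)
              simp only [Finset.mem_Icc]; omega
          · rw [Finset.sum_insert hnotmem]; omega
  intro m hm
  have hsum : m ≤ ∑ i ∈ Finset.Icc 1 m, H i := by
    calc m = ∑ i ∈ Finset.Icc 1 m, 1 := by simp
    _ ≤ ∑ i ∈ Finset.Icc 1 m, H i :=
        Finset.sum_le_sum fun i hi => hpos i (Finset.mem_Icc.mp hi).1
  obtain ⟨T, hT, hs⟩ := key m m hm hsum
  exact ⟨T, fun i hi => (Finset.mem_Icc.mp (hT hi)).1, hs⟩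

lemma brown_incomplete (H : ℕ → ℕ) (n₀ : ℕ) (hn₀ : 1 ≤ n₀)
    (hmono : ∀ j, n₀ ≤ j → H n₀ ≤ H j)
    (hgap : 1 + ∑ i ∈ Finset.Icc 1 (n₀ - 1), H i < H n₀) :
    ¬ SeqComplete H := by
  intro hc
  obtain ⟨T, hT1, hTs⟩ := hc (1 + ∑ i ∈ Finset.Icc 1 (n₀ - 1), H i) (by omega)
  by_cases hsub : T ⊆ Finset.Icc 1 (n₀ - 1)
  · have := Finset.sum_le_sum_of_subset (f := H) hsub
    omega
  · rw [Finset.not_subset] at hsub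
    obtain ⟨j, hjT, hjn⟩ := hsub
    have hj1 := hT1 j hjT
    rw [Finset.mem_Icc] at hjn
    have hj : n₀ ≤ j := by omega
    have h1 : H j ≤ ∑ i ∈ T, H i := Finset.single_le_sum (fun i _ => Nat.zero_le _) hjT
    have h2 := hmono j hj
    omega

lemma mono_of (L N : ℕ) (H : ℕ → ℕ) (hL : 2 ≤ L)
    (hsmall : ∀ n, 1 ≤ n → n ≤ L → H n = n)
    (hrec : ∀ n, L ≤ n → H (n+1) = H n + N * H (n+1-L)) :
    ∀ i j, 1 ≤ i → i ≤ j → H i ≤ H j := by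
  have h1 : ∀ n, 1 ≤ n → H n ≤ H (n+1) := by
    intro n hn
    by_cases h : n < L
    · rw [hsmall n hn (by omega), hsmall (n+1) (by omega) (by omega)]; omega
    · rw [hrec n (by omega)]; omega
  intro i j hi hij
  induction j, hij using Nat.le_induction with
  | base => exact le_rfl
  | succ n hn ih => exact le_trans ih (h1 n (by omega))

section
variable (L N : ℕ) (H : ℕ → ℕ)

lemma Bsucc (m : ℕ) (hm : 1 ≤ m) :
    BrownGap H (m+1) = BrownGap H m + 2*(H m : ℤ) - (H (m+1) : ℤ) := by
  unfold BrownGap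
  obtain ⟨p, rfl⟩ : ∃ p, m = p + 1 := ⟨m - 1, by omega⟩
  simp only [Nat.add_sub_cancel]
  rw [Finset.sum_Icc_succ_top (by omega : 1 ≤ p+1)]
  ring

variable (hL : 2 ≤ L)
    (hsmall : ∀ n, 1 ≤ n → n ≤ L → H n = n)
    (hrec : ∀ n, L ≤ n → H (n+1) = H n + N * H (n+1-L))

include hL hsmall hrec

lemma key_id : ∀ m : ℕ, H (m + L) = L + N * ∑ i ∈ Finset.Icc 1 m, H i := by
  intro m
  induction m with
  | zero => simpa using hsmall L (by omega) le_rfl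
  | succ m ih =>
    have h1 : H (m + 1 + L) = H (m + L) + N * H (m + 1) := by
      have := hrec (m + L) (by omega)
      have e : m + L + 1 - L = m + 1 := by omega
      have e2 : m + L + 1 = m + 1 + L := by omega
      rw [e, e2] at this
      exact this
    rw [h1, ih, Finset.sum_Icc_succ_top (by omega : 1 ≤ m+1)]
    ring

omit hrec in
lemma Bsmall : ∀ m : ℕ, 1 ≤ m → m ≤ L →
    2 * BrownGap H m = ((m : ℤ) - 1) * ((m : ℤ) - 2) := by
  intro m
  induction m with
  | zero => omega
  | succ m ih =>
    intro _ hm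
    by_cases hm1 : m = 0
    · subst hm1
      simp [BrownGap, hsmall 1 le_rfl (by omega)]
    · have ihv := ih (by omega) (by omega)
      rw [Bsucc H m (by omega), hsmall m (by omega) (by omega),
        hsmall (m+1) (by omega) (by omega)]
      push_cast
      push_cast at ihv
      nlinarith [ihv]

lemma master : ∀ n : ℕ, L ≤ n →
    BrownGap H (n+1) = BrownGap H n + N * BrownGap H (n+1-L) + L - N := by
  intro n hn
  have hrecn := hrec n hn
  have hkey := key_id L N H hL hsmall hrec (n - L)
  have e : n - L + L = n := by omega
  rw [e] at hkey
  have e2 : n + 1 - L = (n - L) + 1 := by omega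
  rw [Bsucc H n (by omega), e2]
  unfold BrownGap
  simp only [Nat.add_sub_cancel, Nat.succ_sub_one]
  have hsumcast : (↑(∑ i ∈ Finset.Icc 1 (n-L), H i) : ℤ) = ∑ i ∈ Finset.Icc 1 (n-L), (H i : ℤ) :=
    Nat.cast_sum _ _
  have hrecz : (H (n+1) : ℤ) = H n + N * H ((n-L)+1) := by
    rw [hrecn, ← e2]; push_cast; ring
  have hkeyz : (H n : ℤ) = L + N * ∑ i ∈ Finset.Icc 1 (n-L), (H i : ℤ) := by
    rw [hkey, ← hsumcast]; push_cast; ring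
  rw [hrecz, hkeyz]
  ring

omit hrec in
lemma B1_eq : BrownGap H 1 = 0 := by
  simp [BrownGap, hsmall 1 le_rfl (by omega)]

omit hrec in
lemma B2_eq : BrownGap H 2 = 0 := by
  have h1 := hsmall 1 le_rfl (by omega)
  have h2 := hsmall 2 (by omega) hL
  simp [BrownGap, h1, h2]

lemma BL1_eq : 2 * BrownGap H (L+1) = ((L:ℤ)-1)*((L:ℤ)-2) + 2*((L:ℤ) - N) := by
  have hm := master L N H hL hsmall hrec L le_rfl
  have e : L + 1 - L = 1 := by omega
  rw [e, B1_eq L H hL hsmall] at hm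
  have hBL := Bsmall L H hL hsmall L (by omega) le_rfl
  rw [hm]; push_cast; linarith

lemma BL2_eq : 2 * BrownGap H (L+2) = ((L:ℤ)-1)*((L:ℤ)-2) + 4*((L:ℤ) - N) := by
  have hm := master L N H hL hsmall hrec (L+1) (by omega)
  have e : L + 1 + 1 - L = 2 := by omega
  rw [e, B2_eq L H hL hsmall] at hm
  have := BL1_eq L N H hL hsmall hrec
  have e2 : L + 1 + 1 = L + 2 := by omega
  rw [e2] at hm
  rw [hm]; push_cast; linarith

lemma Bnonneg (hN : 1 ≤ N) (h4 : 4*N ≤ L*L + L + 2) :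
    ∀ m, 1 ≤ m → 0 ≤ BrownGap H m := by
  have hmaster : ∀ m, L + 1 ≤ m →
      BrownGap H m = BrownGap H (m-1) + N * BrownGap H (m-L) + L - N := by
    intro m hm
    have := master L N H hL hsmall hrec (m-1) (by omega)
    have e : m - 1 + 1 = m := by omega
    rw [e] at this
    have e2 : m - L = m - 1 + 1 - L := by omega
    rw [this, e2]
  by_cases hNL : N ≤ L
  · -- easy case
    intro m
    induction m using Nat.strong_induction_on with
    | _ m ih =>
      intro hm
      by_cases hsm : m ≤ L
      · have h2 := Bsmall L H hL hsmall m hm hsm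
        have hc : (1:ℤ) ≤ (m:ℤ) := by exact_mod_cast hm
        by_cases h1 : m = 1
        · subst h1; simp at h2; linarith
        · have : (2:ℤ) ≤ (m:ℤ) := by exact_mod_cast (by omega : 2 ≤ m)
          nlinarith
      · have heq := hmaster m (by omega)
        have i1 := ih (m-1) (by omega) (by omega)
        have i2 := ih (m-L) (by omega) (by omega)
        have hp : (0:ℤ) ≤ (N:ℤ) * BrownGap H (m-L) :=
          mul_nonneg (by positivity) i2
        have hnl : (N:ℤ) ≤ (L:ℤ) := by exact_mod_cast hNL
        linarith [heq, i1]
  · -- hard case: L < N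
    push_neg at hNL
    have hL4 : 4 ≤ L := by nlinarith
    have claim : ∀ m, 1 ≤ m → (0 ≤ BrownGap H m ∧
        (3 ≤ m → m ≠ L+2 → 1 ≤ BrownGap H m) ∧
        (L+3 ≤ m → m ≤ 2*L+1 → ((m:ℤ) - ((L:ℤ)+2))*(L:ℤ) ≤ BrownGap H m)) := by
      intro m
      induction m using Nat.strong_induction_on with
      | _ m ih =>
        intro hm
        by_cases hc2 : m ≤ 2
        · have : m = 1 ∨ m = 2 := by omega
          rcases this with rfl | rfl
          · rw [B1_eq L H hL hsmall]
            refine ⟨le_rfl, by omega, by omega⟩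
          · rw [B2_eq L H hL hsmall]
            refine ⟨le_rfl, by omega, by omega⟩
        by_cases hcL : m ≤ L
        · have h2 := Bsmall L H hL hsmall m hm hcL
          have hc : (3:ℤ) ≤ (m:ℤ) := by exact_mod_cast (by omega : 3 ≤ m)
          have hB1 : 1 ≤ BrownGap H m := by nlinarith
          exact ⟨by linarith, fun _ _ => hB1, fun h _ => absurd h (by omega)⟩
        by_cases hcL1 : m = L + 1
        · subst hcL1
          have h2 := BL1_eq L N H hL hsmall hrec
          have h2N : 2*(N:ℤ) ≤ (L:ℤ)*(L:ℤ) - (L:ℤ) := by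
            have h4' : 4*(N:ℤ) ≤ (L:ℤ)*(L:ℤ) + (L:ℤ) + 2 := by exact_mod_cast h4
            have hL4' : (4:ℤ) ≤ (L:ℤ) := by exact_mod_cast hL4
            nlinarith
          have hB1 : 1 ≤ BrownGap H (L+1) := by
            have hL4' : (4:ℤ) ≤ (L:ℤ) := by exact_mod_cast hL4
            nlinarith
          exact ⟨by linarith, fun _ _ => hB1, fun h _ => absurd h (by omega)⟩
        by_cases hcL2 : m = L + 2
        · subst hcL2
          have h2 := BL2_eq L N H hL hsmall hrec
          have h4' : 4*(N:ℤ) ≤ (L:ℤ)*(L:ℤ) + (L:ℤ) + 2 := by exact_mod_cast h4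
          have hB0 : 0 ≤ BrownGap H (L+2) := by nlinarith
          exact ⟨hB0, fun _ h => absurd rfl h, fun h _ => absurd h (by omega)⟩
        -- now m ≥ L+3
        have hm3 : L + 3 ≤ m := by omega
        have heq := hmaster m (by omega)
        have hNz : (0:ℤ) ≤ (N:ℤ) := by positivity
        have hLz : (4:ℤ) ≤ (L:ℤ) := by exact_mod_cast hL4
        by_cases hzone : m ≤ 2*L + 1
        · -- linear zone
          have isub := ih (m-L) (by omega) (by omega)
          have hsub1 : 1 ≤ BrownGap H (m-L) :=
            isub.2.1 (by omega) (by omega)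
          have iprev := ih (m-1) (by omega) (by omega)
          have hprev : ((m:ℤ) - 1 - ((L:ℤ)+2))*(L:ℤ) ≤ BrownGap H (m-1) := by
            by_cases hp : m - 1 = L + 2
            · have e : (m:ℤ) - 1 - ((L:ℤ)+2) = 0 := by
                have : (m:ℤ) = (L:ℤ) + 3 := by exact_mod_cast (by omega : m = L + 3)
                rw [this]; ring
              rw [e, zero_mul]
              exact iprev.1
            · have := iprev.2.2 (by omega) (by omega)
              have e : ((m:ℤ) - 1) = ((m-1 : ℕ) : ℤ) := by omega
              rw [e]; exact this
          have hmul : (N:ℤ) * 1 ≤ (N:ℤ) * BrownGap H (m-L) :=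
            mul_le_mul_of_nonneg_left hsub1 hNz
          have hthird : ((m:ℤ) - ((L:ℤ)+2))*(L:ℤ) ≤ BrownGap H m := by
            have expand : ((m:ℤ) - ((L:ℤ)+2))*(L:ℤ)
                = ((m:ℤ) - 1 - ((L:ℤ)+2))*(L:ℤ) + (L:ℤ) := by ring
            rw [heq, expand]; linarith
          have hone : (1:ℤ) ≤ ((m:ℤ) - ((L:ℤ)+2))*(L:ℤ) := by
            have : (L:ℤ) + 3 ≤ (m:ℤ) := by exact_mod_cast hm3
            nlinarith
          exact ⟨by linarith, fun _ _ => by linarith, fun _ _ => hthird⟩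
        by_cases hbdry : m = 2*L + 2
        · -- m = 2L+2
          have isub := ih (m-L) (by omega) (by omega)
          have hsub0 : 0 ≤ BrownGap H (m-L) := isub.1
          have iprev := ih (m-1) (by omega) (by omega)
          have hprev : ((L:ℤ) - 1)*(L:ℤ) ≤ BrownGap H (m-1) := by
            have := iprev.2.2 (by omega) (by omega)
            have e : ((m-1 : ℕ) : ℤ) - ((L:ℤ)+2) = (L:ℤ) - 1 := by omega
            rw [e] at this; exact this
          have hmul : (0:ℤ) ≤ (N:ℤ) * BrownGap H (m-L) := mul_nonneg hNz hsub0
          have hNle : (N:ℤ) ≤ (L:ℤ)*(L:ℤ) - 1 := by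
            have h4' : 4*(N:ℤ) ≤ (L:ℤ)*(L:ℤ) + (L:ℤ) + 2 := by exact_mod_cast h4
            nlinarith
          have hB1 : 1 ≤ BrownGap H m := by
            rw [heq]; nlinarith
          exact ⟨by linarith, fun _ _ => hB1, fun _ h => absurd h (by omega)⟩
        · -- m ≥ 2L+3
          have isub := ih (m-L) (by omega) (by omega)
          have hsub1 : 1 ≤ BrownGap H (m-L) := isub.2.1 (by omega) (by omega)
          have iprev := ih (m-1) (by omega) (by omega)
          have hmul : (N:ℤ) * 1 ≤ (N:ℤ) * BrownGap H (m-L) :=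
            mul_le_mul_of_nonneg_left hsub1 hNz
          have hB1 : 1 ≤ BrownGap H m := by
            rw [heq]; linarith [iprev.1]
          exact ⟨by linarith, fun _ _ => hB1, fun _ h => absurd h (by omega)⟩
    intro m hm
    exact (claim m hm).1

end

lemma main_aux (L N : ℕ) (hL : 2 ≤ L) (hN : 1 ≤ N) (H : ℕ → ℕ)
    (hsmall : ∀ n, 1 ≤ n → n ≤ L → H n = n)
    (hrec : ∀ n, L ≤ n → H (n+1) = H n + N * H (n+1-L)) :
    SeqComplete H ↔ 4*N ≤ L*L + L + 2 := by
  have hmono := mono_of L N H hL hsmall hrec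
  have hpos : ∀ n, 1 ≤ n → 1 ≤ H n := by
    intro n hn
    have := hmono 1 n le_rfl hn
    have h1 := hsmall 1 le_rfl (by omega)
    omega
  have hcast : ∀ n : ℕ, ((∑ i ∈ Finset.Icc 1 n, H i : ℕ) : ℤ)
      = ∑ i ∈ Finset.Icc 1 n, (H i : ℤ) := fun n => Nat.cast_sum _ _
  constructor
  · intro hc
    by_contra h4
    push_neg at h4
    have hBL2 := BL2_eq L N H hL hsmall hrec
    have hBneg : BrownGap H (L+2) < 0 := by
      have h4' : (L:ℤ)*(L:ℤ) + (L:ℤ) + 2 < 4*(N:ℤ) := by exact_mod_cast h4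
      nlinarith
    have hgap : 1 + ∑ i ∈ Finset.Icc 1 (L+2-1), H i < H (L+2) := by
      unfold BrownGap at hBneg
      rw [← hcast] at hBneg
      omega
    exact brown_incomplete H (L+2) (by omega)
      (fun j hj => hmono (L+2) j (by omega) hj) hgap hc
  · intro h4
    apply brown_complete H hpos
    intro n hn
    have := Bnonneg L N H hL hsmall hrec hN h4 n hn
    unfold BrownGap at this
    rw [← hcast] at this
    omega

theorem stmt4 (k N : ℕ) (hN : 1 ≤ N) (H : ℕ → ℕ)
    (hH : IsPLRS (k + 2) (fun i => if i = 1 then 1 else if i = k + 2 then N else 0) H) :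
    SeqComplete H ↔
      (1 ≤ N ∧ (N : ℤ) ≤ ⌈(((k : ℚ) + 2) * ((k : ℚ) + 3)) / 4⌉) := by
  obtain ⟨-, -, -, h1, hsm, hbig⟩ := hH
  set L := k + 2 with hLdef
  have hL : 2 ≤ L := by omega
  -- small values
  have hstep : ∀ n, 1 ≤ n → n < L → H (n+1) = H n + 1 := by
    intro n h1n h2n
    have hs := hsm n h1n h2n
    rw [Finset.sum_eq_single_of_mem 1 (Finset.mem_Icc.mpr ⟨le_rfl, h1n⟩)] at hs
    · simpa using hs
    · intro j hj hj1
      have hjm := Finset.mem_Icc.mp hj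
      have hj2 : j ≠ k + 2 := by omega
      simp [hj1, hj2, hLdef]
  have hsmall : ∀ n, 1 ≤ n → n ≤ L → H n = n := by
    intro n
    induction n with
    | zero => omega
    | succ m ih =>
      intro _ hm
      by_cases hm0 : m = 0
      · subst hm0; simpa using h1
      · rw [hstep m (by omega) (by omega), ih (by omega) (by omega)]
  -- recurrence
  have hrec : ∀ n, L ≤ n → H (n+1) = H n + N * H (n+1-L) := by
    intro n hn
    have hb := hbig n hn
    have hsub : ({1, L} : Finset ℕ) ⊆ Finset.Icc 1 L := by
      intro x hx
      simp only [Finset.mem_insert, Finset.mem_singleton] at hx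
      rcases hx with rfl | rfl <;> simp [Finset.mem_Icc] <;> omega
    have hzero : ∀ x ∈ Finset.Icc 1 L, x ∉ ({1, L} : Finset ℕ) →
        (if x = 1 then 1 else if x = k + 2 then N else 0) * H (n + 1 - x) = 0 := by
      intro x hx hxn
      simp only [Finset.mem_insert, Finset.mem_singleton, not_or] at hxn
      have : x ≠ 1 := hxn.1
      have : x ≠ k + 2 := hxn.2
      simp [hxn.1, hxn.2, ← hLdef]
    rw [← Finset.sum_subset hsub hzero, Finset.sum_pair (by omega : (1:ℕ) ≠ L)] at hb
    have hL1 : L ≠ 1 := by omega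
    simpa [hL1, hLdef] using hb
  rw [main_aux L N hL hN H hsmall hrec]
  -- ceiling arithmetic
  have heven : ∃ t, (k+2)*(k+3) = 2*t := by
    obtain ⟨t, ht⟩ := Nat.even_mul_succ_self (k+2)
    refine ⟨t, ?_⟩
    have he2 : (k+2)*(k+2+1) = (k+2)*(k+3) := by ring
    omega
  obtain ⟨t, ht⟩ := heven
  have hq : ((k : ℚ) + 2) * ((k : ℚ) + 3) = (((k+2)*(k+3) : ℕ) : ℚ) := by
    push_cast; ring
  rw [hq]
  have hLL : L*L + L + 2 = (k+2)*(k+3) + 2 := by simp only [hLdef]; ring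
  rw [hLL]
  constructor
  · intro h4
    refine ⟨hN, ?_⟩
    have h2 : ((N:ℤ) - 1) < ⌈(((k+2)*(k+3) : ℕ) : ℚ) / 4⌉ := by
      rw [Int.lt_ceil]
      have h4q : (4*(N:ℚ)) ≤ (((k+2)*(k+3) : ℕ) : ℚ) + 2 := by exact_mod_cast h4
      push_cast
      push_cast at h4q
      linarith
    linarith [h2]
  · rintro ⟨-, hce⟩
    have h2 : ((N:ℤ) - 1) < ⌈(((k+2)*(k+3):ℕ):ℚ)/4⌉ := by linarith [hce]
    rw [Int.lt_ceil] at h2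
    push_cast at h2
    have h6 : (4*(N:ℚ)) < ((k:ℚ)+2)*((k:ℚ)+3) + 4 := by linarith
    have h5 : 4*N < (k+2)*(k+3) + 4 := by exact_mod_cast h6
    rw [ht] at h5 ⊢
    clear h2 h6 hce hq hLL
    omega
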